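/- For every x ∈ ℝ³ with B(x,x) = 1, x₁ > 0, and B(Mⁿx, c) ≠ 0 for every integer n, there exists a unique integer n such that B(Mⁿx, c) > 0 and B(M^{n+1}x, c) < 0. (In the paper: for any generic starting point ω(h₀) on the hyperboloid, there is a unique n for which the nth iterate under the parabolic transformation induced by f lies on one side of the wall W and the (n+1)st iterate lies on the other side; this is the key step in showing SW_tot(f,Γ) = SW(Γ_X).) -/

import Mathlib

/-- The intersection form of `N = CP² # (−CP²) # (−CP²)` in the basis `S, E₁, E₂`:
`B x y = x₁y₁ − x₂y₂ − x₃y₃`. -/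
def interForm (x y : Fin 3 → ℝ) : ℝ := x 0 * y 0 - x 1 * y 1 - x 2 * y 2

/-- The matrix of `f_* = (ρ_{Σ₊} ∘ ρ_{Σ₋})_*` on `H₂(N)`. -/
noncomputable def M : Matrix (Fin 3) (Fin 3) ℝ := !![9, 4, -8; 4, 1, -4; 8, 4, -7]

/-- The coordinate vector `c = (1,1,1)` of the Poincaré dual of `c₁(Γ_N) = s + e₁ + e₂`. -/
def c : Fin 3 → ℝ := ![1, 1, 1]


lemma step (y : Fin 3 → ℝ) : interForm (M.mulVec y) c = interForm y c - 4*(y 0 - y 2) ∧ (M.mulVec y) 0 - (M.mulVec y) 2 = y 0 - y 2 := by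
  constructor <;> simp [M, interForm, c, Matrix.mulVec, dotProduct, Fin.sum_univ_three] <;> ring

lemma detM : IsUnit M.det := by
  have : M.det = 1 := by simp [M, Matrix.det_fin_three]; norm_num
  rw [this]; exact isUnit_one

lemma key (x : Fin 3 → ℝ) (n : ℤ) :
    interForm ((M ^ n).mulVec x) c = (x 0 - x 1 - x 2) - 4*(x 0 - x 2)*n ∧
    ((M ^ n).mulVec x) 0 - ((M ^ n).mulVec x) 2 = x 0 - x 2 := by
  induction n using Int.induction_on with
  | zero => simp [interForm, c]
  | succ n ih =>
      have h1 : M ^ ((n : ℤ) + 1) = M * M ^ (n : ℤ) := by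
        rw [add_comm, Matrix.zpow_add detM, zpow_one]
      rw [h1, ← Matrix.mulVec_mulVec]
      obtain ⟨s1, s2⟩ := step ((M ^ (n : ℤ)).mulVec x)
      refine ⟨?_, by rw [s2, ih.2]⟩
      rw [s1, ih.1, ih.2]; push_cast; ring
  | pred n ih =>
      have h1 : M ^ (-(n : ℤ)) = M * M ^ (-(n : ℤ) - 1) := by
        have := Matrix.zpow_add detM 1 (-(n : ℤ) - 1)
        rw [zpow_one] at this
        rw [← this]; norm_num
      rw [h1, ← Matrix.mulVec_mulVec] at ih
      obtain ⟨s1, s2⟩ := step ((M ^ (-(n : ℤ) - 1)).mulVec x)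
      rw [s2] at ih
      rw [s1] at ih
      refine ⟨?_, ih.2⟩
      have := ih.1
      push_cast at this ⊢
      try linarith [ih.2, this]

/-- For a generic starting point on the hyperboloid, there is a unique `n` for which the
`n`-th iterate under the parabolic transformation `M` lies on the positive side of the wall
`W = {ω : B(ω,ω) = 1, ω₁ > 0, B(ω,c) = 0}` and the `(n+1)`-st iterate on the negative side. -/
theorem stmt3 (x : Fin 3 → ℝ) (hx : interForm x x = 1) (hx0 : x 0 > 0)
    (hgen : ∀ n : ℤ, interForm ((M ^ n).mulVec x) c ≠ 0) :
    ∃! n : ℤ, interForm ((M ^ n).mulVec x) c > 0 ∧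
      interForm ((M ^ (n + 1)).mulVec x) c < 0 := by
  set b0 : ℝ := x 0 - x 1 - x 2 with hb0
  set u : ℝ := x 0 - x 2 with hu
  have hxx : x 0 * x 0 - x 1 * x 1 - x 2 * x 2 = 1 := hx
  have hupos : 0 < u := by
    by_contra h
    push_neg at h
    nlinarith [sq_nonneg (x 1)]
  have h4u : (0:ℝ) < 4 * u := by linarith
  set r : ℝ := b0 / (4 * u) with hr
  have hgr : ∀ n : ℤ, interForm ((M ^ n).mulVec x) c = 4 * u * (r - n) := by
    intro n
    rw [(key x n).1]
    field_simp [hr]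
    have hu0 : u ≠ 0 := hupos.ne'
    have h : 4 * u * r = b0 := by rw [hr]; field_simp
    linear_combination (-1 : ℝ) * h - hb0 + 4 * (n : ℝ) * hu
  have hne : ∀ n : ℤ, (n : ℝ) ≠ r := by
    intro n hn
    apply hgen n
    rw [hgr n, ← hn]
    simp
  have hpos : ∀ n : ℤ, (0 < interForm ((M ^ n).mulVec x) c ↔ (n : ℝ) < r) := by
    intro n
    rw [hgr n]
    constructor
    · intro h
      nlinarith
    · intro h
      have : 0 < r - n := by linarith
      positivity
  refine ⟨⌊r⌋, ⟨?_, ?_⟩, ?_⟩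
  · exact (hpos ⌊r⌋).2 (lt_of_le_of_ne (Int.floor_le r) (hne ⌊r⌋))
  · have h1 : ¬ ((⌊r⌋ + 1 : ℤ) : ℝ) < r := by
      push_cast
      have := Int.lt_floor_add_one r
      linarith
    have := (hpos (⌊r⌋ + 1)).not.mpr h1  -- not pos
    rcases lt_trichotomy (interForm ((M ^ (⌊r⌋ + 1)).mulVec x) c) 0 with h | h | h
    · exact h
    · exact absurd h (hgen _)
    · exact absurd h this
  · rintro m ⟨hm1, hm2⟩
    have h1 : (m : ℝ) < r := (hpos m).1 hm1
    have h2 : ¬ ((m + 1 : ℤ) : ℝ) < r := by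
      intro h
      exact absurd ((hpos (m + 1)).2 h) (not_lt.mpr (le_of_lt hm2))
    push_cast at h2
    symm
    rw [Int.floor_eq_iff]
    constructor
    · linarith
    · push_cast
      have h3 : r ≤ (m:ℝ) + 1 := not_lt.mp h2
      have h4 : ((m+1 : ℤ):ℝ) ≠ r := hne (m+1)
      push_cast at h4
      exact lt_of_le_of_ne h3 (fun h => h4 h.symm)
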